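/- For c ∈ ℝ^d, sort c decreasingly into a with a₁ ≥ ... ≥ a_d, set γ_k = (a₁ + ... + a_k - 1)/k, and let k* be the largest k with a_k > γ_k. Then the Euclidean projection of c onto the probability simplex is z* = max(c - γ_{k*}, 0) componentwise. -/
import Mathlib

theorem step_aux (A B x y a : ℝ) (hA : 0 < A) (hAB : A = B + 1)
    (h1 : (A+1)*x = (B+1)*y + a) (h2 : a ≤ x) : x ≤ y := by
  have e : A*y = B*y + y := by rw [hAB]; ring
  have h3 : A*x ≤ A*y := by linarith
  exact le_of_mul_le_mul_left h3 hA

/-- Euclidean projection onto the probability simplex: the sorting-based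
threshold formula `z* = max(c - γ_{k*}, 0)`. -/
theorem simplex_projection_formula {d : ℕ} (hd : 0 < d)
    (c : Fin d → ℝ) (π : Equiv.Perm (Fin d))
    (hsort : ∀ i j : Fin d, i ≤ j → c (π j) ≤ c (π i))
    (γ : Fin d → ℝ)
    (hγ : ∀ k : Fin d,
      γ k = ((∑ i : Fin d, if i ≤ k then c (π i) else 0) - 1) / ((k : ℕ) + 1))
    (kstar : Fin d)
    (hk1 : γ kstar < c (π kstar))
    (hk2 : ∀ k : Fin d, γ k < c (π k) → k ≤ kstar) :
    (∀ s, 0 ≤ max (c s - γ kstar) 0) ∧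
    (∑ s, max (c s - γ kstar) 0) = 1 ∧
    ∀ z : Fin d → ℝ, (∀ s, 0 ≤ z s) → (∑ s, z s = 1) →
      ∑ s, (max (c s - γ kstar) 0 - c s) ^ 2 ≤ ∑ s, (z s - c s) ^ 2 := by
  have key : ∀ j : Fin d, (((j:ℕ):ℝ)+1) * γ j
      = (∑ i : Fin d, if i ≤ j then c (π i) else 0) - 1 := by
    intro j
    rw [hγ j]
    field_simp
  -- splitting the partial sum at a successor
  have hsplit : ∀ j j' : Fin d, (j:ℕ) = (j':ℕ) + 1 →
      (∑ i : Fin d, if i ≤ j then c (π i) else 0)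
      = (∑ i : Fin d, if i ≤ j' then c (π i) else 0) + c (π j) := by
    intro j j' hv
    have hpt : ∀ i : Fin d, (if i ≤ j then c (π i) else 0)
        = (if i ≤ j' then c (π i) else 0) + (if i = j then c (π i) else 0) := by
      intro i
      by_cases h2 : i ≤ j'
      · have h3 : i ≤ j := by simp only [Fin.le_def] at h2 ⊢; omega
        have h4 : i ≠ j := by
          intro h; subst h
          simp only [Fin.le_def] at h2; omega
        simp [h2, h3, h4]
      · by_cases h5 : i = j
        · subst h5; simp [h2, le_refl]
        · have h6 : ¬ i ≤ j := by
            simp only [Fin.le_def] at h2 ⊢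
            simp only [Fin.ext_iff] at h5
            omega
          simp [h2, h5, h6]
    rw [Finset.sum_congr rfl (fun i _ => hpt i), Finset.sum_add_distrib]
    congr 1
    simp
  -- γ is ≤ γ kstar for indices beyond kstar
  have hγdec : ∀ n : ℕ, ∀ hn : (kstar:ℕ) + n < d,
      γ ⟨(kstar:ℕ) + n, hn⟩ ≤ γ kstar := by
    intro n
    induction n with
    | zero =>
      intro hn
      exact le_of_eq (congrArg γ (Fin.ext (by simp)))
    | succ m ih =>
      intro hn
      have hm : (kstar:ℕ) + m < d := by omega
      set j : Fin d := ⟨(kstar:ℕ) + m + 1, by omega⟩ with hj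
      set j' : Fin d := ⟨(kstar:ℕ) + m, hm⟩ with hj'
      have hcj : c (π j) ≤ γ j := by
        by_contra h
        push_neg at h
        have h2 := hk2 j h
        simp only [Fin.le_def, hj] at h2
        omega
      have hv : (j:ℕ) = (j':ℕ) + 1 := by simp [hj, hj']
      have hrel : (((j:ℕ):ℝ)+1) * γ j = (((j':ℕ):ℝ)+1) * γ j' + c (π j) := by
        have k1 := key j
        have k2 := key j'
        have h3 := hsplit j j' hv
        linarith
      have hA : (0:ℝ) < ((j:ℕ):ℝ) := by
        have : 0 < (j:ℕ) := by simp [hj]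
        exact_mod_cast this
      have hAB : ((j:ℕ):ℝ) = ((j':ℕ):ℝ) + 1 := by exact_mod_cast hv
      have hjj : γ j ≤ γ j' := step_aux _ _ _ _ _ hA hAB hrel hcj
      exact hjj.trans (ih hm)
  -- beyond kstar, the sorted values are below the threshold
  have hB : ∀ j : Fin d, kstar < j → c (π j) ≤ γ kstar := by
    intro j hj
    have hcj : c (π j) ≤ γ j := by
      by_contra h
      push_neg at h
      exact absurd (hk2 j h) (not_le.2 hj)
    have hlt : (kstar:ℕ) < (j:ℕ) := hj
    have hn : (kstar:ℕ) + ((j:ℕ) - (kstar:ℕ)) < d := by omega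
    have hje : j = ⟨(kstar:ℕ) + ((j:ℕ) - (kstar:ℕ)), hn⟩ := Fin.ext (by simp; omega)
    have := hγdec ((j:ℕ) - (kstar:ℕ)) hn
    rw [← hje] at this
    linarith
  -- up to kstar, sorted values are above the threshold
  have hA : ∀ i : Fin d, i ≤ kstar → γ kstar < c (π i) :=
    fun i hi => lt_of_lt_of_le hk1 (hsort i kstar hi)
  set θ := γ kstar with hθ
  -- explicit form of the max on sorted indices
  have hform : ∀ i : Fin d, max (c (π i) - θ) 0
      = if i ≤ kstar then c (π i) - θ else 0 := by
    intro i
    by_cases h : i ≤ kstar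
    · rw [if_pos h, max_eq_left]
      have := hA i h; linarith
    · rw [if_neg h, max_eq_right]
      have := hB i (lt_of_not_ge h); linarith
  -- the sum equals 1
  have hsum1 : (∑ s, max (c s - θ) 0) = 1 := by
    have h0 : (∑ s, max (c s - θ) 0) = ∑ i, max (c (π i) - θ) 0 :=
      (Equiv.sum_comp π (fun s => max (c s - θ) 0)).symm
    have h1 : (∑ i, max (c (π i) - θ) 0)
        = (∑ i : Fin d, if i ≤ kstar then c (π i) else 0)
          - (((kstar:ℕ):ℝ) + 1) * θ := by
      rw [Finset.sum_congr rfl (fun i _ => hform i)]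
      have h2 : ∀ i : Fin d, (if i ≤ kstar then c (π i) - θ else 0)
          = (if i ≤ kstar then c (π i) else 0) - (if i ≤ kstar then θ else 0) := by
        intro i; by_cases h : i ≤ kstar <;> simp [h]
      rw [Finset.sum_congr rfl (fun i _ => h2 i), Finset.sum_sub_distrib]
      congr 1
      rw [← Finset.sum_filter, Finset.sum_const]
      have : (Finset.univ.filter (· ≤ kstar)) = Finset.Iic kstar := by
        ext i; simp
      rw [this, Fin.card_Iic]
      push_cast
      ring
    have k1 := key kstar
    rw [h0, h1]
    linarith
  refine ⟨fun s => le_max_right _ _, hsum1, ?_⟩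
  -- optimality
  intro z hz hz1
  set f : Fin d → ℝ := fun s => max (c s - θ) 0 with hf
  have hsum0 : ∑ s, (z s - f s) = 0 := by
    rw [Finset.sum_sub_distrib, hz1, hsum1]; ring
  have hterm : ∀ s, 0 ≤ (z s - f s) * (f s - c s + θ) := by
    intro s
    rcases le_total (c s - θ) 0 with h | h
    · have hfs : f s = 0 := max_eq_right h
      rw [hfs]
      apply mul_nonneg
      · simpa using hz s
      · linarith
    · have hfs : f s = c s - θ := max_eq_left h
      rw [hfs]
      have : c s - θ - c s + θ = 0 := by ring
      rw [this, mul_zero]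
  have hcross : 0 ≤ ∑ s, (z s - f s) * (f s - c s) := by
    have h1 : ∑ s, (z s - f s) * (f s - c s)
        = (∑ s, (z s - f s) * (f s - c s + θ)) - θ * ∑ s, (z s - f s) := by
      rw [Finset.mul_sum, ← Finset.sum_sub_distrib]
      exact Finset.sum_congr rfl (fun s _ => by ring)
    rw [h1, hsum0, mul_zero, sub_zero]
    exact Finset.sum_nonneg fun s _ => hterm s
  have hexp : ∑ s, (z s - c s) ^ 2
      = ∑ s, (f s - c s) ^ 2 + ∑ s, (z s - f s) ^ 2
        + 2 * ∑ s, (z s - f s) * (f s - c s) := by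
    rw [← Finset.sum_add_distrib, Finset.mul_sum, ← Finset.sum_add_distrib]
    exact Finset.sum_congr rfl (fun s _ => by ring)
  have hsq : 0 ≤ ∑ s, (z s - f s) ^ 2 :=
    Finset.sum_nonneg fun s _ => sq_nonneg _
  have : ∑ s, (f s - c s) ^ 2 ≤ ∑ s, (z s - c s) ^ 2 := by linarith
  simpa [hf] using this
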